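/- Renaming transforms the metric along the image of the index set: for a renaming relation R on Σ, d_{R(U)}(P[R], Q[R]) ≤ d_U(P, Q), where R(U) = {y | ∃x ∈ U, x R y}. -/
import Mathlib


open scoped Classical

namespace CSPLL

variable {E : Type*}

/-- Events: `none` is the termination signal ✓, `some a` is a visible event. -/
abbrev Ev (E : Type*) := Option E

/-- A member of `Σ^{*✓}`: the termination event ✓ may occur only as the last element. -/
def ValidTrace (s : List (Ev E)) : Prop := (none : Ev E) ∉ s.dropLast

/-- The semantic domain `T↓`: pairs `(T, D)` of (behavioural) traces and divergences
satisfying the axioms of the divergence-strict traces model. -/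
structure TD (E : Type*) where
  T : Set (List (Ev E))
  D : Set (List (Ev E))
  valid : ∀ s ∈ T, ValidTrace s
  d_sub : D ⊆ T
  nonempty : [] ∈ T
  prefix_closed : ∀ s t : List (Ev E), s ++ t ∈ T → s ∈ T
  tick_div : ∀ s : List (Ev E), s ++ [none] ∈ D → s ∈ D
  div_ext : ∀ s t : List (Ev E), s ∈ D → (none : Ev E) ∉ s → ValidTrace t → s ++ t ∈ D

/-- Raw trace/divergence pairs. -/
abbrev Pair (E : Type*) := Set (List (Ev E)) × Set (List (Ev E))

def TD.pair (P : TD E) : Pair E := (P.T, P.D)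

/-- `lengthU U s` counts the occurrences of events from `U` in the trace `s`. -/
noncomputable def lengthU (U : Set E) (s : List (Ev E)) : ℕ :=
  (s.filter fun x => decide (∃ a ∈ U, x = some a)).length

/-- Restriction `(T,D) ↾_U n` of a trace/divergence pair to `U`-length `n`. -/
noncomputable def restrict (U : Set E) (n : ℕ) (P : Pair E) : Pair E :=
  let D' := P.2 ∪ {u | ∃ s t, s ∈ P.1 ∧ (none : Ev E) ∉ s ∧ lengthU U s = n ∧
                       ValidTrace t ∧ u = s ++ t}
  (D' ∪ {s ∈ P.1 | lengthU U s ≤ n}, D')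

/-- The metric `d_U(P,Q) = inf {2^{-n} | P ↾_U n = Q ↾_U n}` (taken in `[0,1]`). -/
noncomputable def dU (U : Set E) (P Q : Pair E) : ℝ :=
  sInf {x : ℝ | ∃ n : ℕ, restrict U n P = restrict U n Q ∧ x = (1 / 2 : ℝ) ^ n}

noncomputable def dTD (U : Set E) (P Q : TD E) : ℝ := dU U P.pair Q.pair

/-- Lifting of a renaming relation on `Σ` to `Σ^✓` (relating ✓ to itself). -/
def RE (R : E → E → Prop) (x y : Ev E) : Prop :=
  match x, y with
  | none, none => True
  | some a, some b => R a b
  | _, _ => False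

/-- Renaming `P[R]` on trace/divergence pairs. -/
def renP (R : E → E → Prop) (P : TD E) : Pair E :=
  let D' := {x | ∃ s ∈ P.D, (none : Ev E) ∉ s ∧ ∃ t r, List.Forall₂ (RE R) s t ∧
      ValidTrace r ∧ x = t ++ r}
  (D' ∪ {t | ∃ s ∈ P.T, List.Forall₂ (RE R) s t}, D')

variable {R : E → E → Prop} {U : Set E}

lemma RE_none_left {y : Ev E} (h : RE R none y) : y = none := by
  cases y <;> simp_all [RE]

lemma RE_none_right {x : Ev E} (h : RE R x none) : x = none := by
  cases x <;> simp_all [RE]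

lemma forall₂_split {r : Ev E → Ev E → Prop} {s₁ s₂ t : List (Ev E)}
    (h : List.Forall₂ r (s₁ ++ s₂) t) :
    ∃ t₁ t₂, t = t₁ ++ t₂ ∧ List.Forall₂ r s₁ t₁ ∧ List.Forall₂ r s₂ t₂ := by
  refine ⟨t.take s₁.length, t.drop s₁.length, (List.take_append_drop _ _).symm, ?_, ?_⟩
  · have := List.forall₂_take s₁.length h
    rwa [List.take_left] at this
  · have := List.forall₂_drop s₁.length h
    rwa [List.drop_left] at this

lemma forall₂_none_mem {s t : List (Ev E)} (h : List.Forall₂ (RE R) s t) :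
    (none ∈ s ↔ none ∈ t) := by
  induction h with
  | nil => simp
  | @cons a b l₁ l₂ hab _ ih =>
      simp only [List.mem_cons, ih]
      cases a <;> cases b <;> simp_all [RE]

lemma validTrace_iff {s : List (Ev E)} :
    ValidTrace s ↔ (none : Ev E) ∉ s ∨ ∃ s', s = s' ++ [none] ∧ (none : Ev E) ∉ s' := by
  constructor
  · intro h
    by_cases hn : (none : Ev E) ∈ s
    · right
      have hne : s ≠ [] := by rintro rfl; simp at hn
      refine ⟨s.dropLast, ?_, h⟩
      have hlast : s.getLast hne = none := by
        have := List.dropLast_append_getLast hne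
        rcases List.mem_append.1 (this ▸ hn) with h1 | h1
        · exact absurd h1 h
        · exact (by simpa using h1 : (none : Ev E) = s.getLast hne).symm
      rw [← hlast]
      exact (List.dropLast_append_getLast hne).symm
    · exact Or.inl hn
  · rintro (h | ⟨s', rfl, h⟩)
    · exact fun hm => h (List.dropLast_sublist s |>.mem hm)
    · simpa [ValidTrace, List.dropLast_concat] using h

lemma forall₂_valid {s t : List (Ev E)} (h : List.Forall₂ (RE R) s t) :
    ValidTrace s → ValidTrace t := by
  intro hv
  rcases validTrace_iff.1 hv with hn | ⟨s', rfl, hn⟩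
  · exact validTrace_iff.2 (Or.inl ((forall₂_none_mem h).not.1 hn))
  · rcases forall₂_split h with ⟨t₁, t₂, rfl, h1, h2⟩
    rcases h2 with _ | ⟨hab, h2⟩
    cases h2
    have := RE_none_left hab
    subst this
    exact validTrace_iff.2 (Or.inr ⟨t₁, rfl, (forall₂_none_mem h1).not.1 hn⟩)

lemma lengthU_append (s t : List (Ev E)) :
    lengthU U (s ++ t) = lengthU U s + lengthU U t := by
  simp [lengthU, List.filter_append]

lemma lengthU_cons {W : Set E} (a : Ev E) (t : List (Ev E)) :
    lengthU W (a :: t) = (if ∃ x ∈ W, a = some x then 1 else 0) + lengthU W t := by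
  by_cases ha : ∃ x ∈ W, a = some x <;> simp [lengthU, List.filter_cons, ha] <;> omega

lemma lengthU_le_of_forall₂ {s t : List (Ev E)} (h : List.Forall₂ (RE R) s t) :
    lengthU U s ≤ lengthU {y | ∃ x ∈ U, R x y} t := by
  induction h with
  | nil => simp [lengthU]
  | @cons a b l₁ l₂ hab _ ih =>
      rw [lengthU_cons, lengthU_cons]
      by_cases ha : ∃ x ∈ U, a = some x
      · obtain ⟨x, hx, rfl⟩ := ha
        obtain ⟨b', rfl⟩ : ∃ b', b = some b' := by
          cases b <;> simp_all [RE]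
        have hb : ∃ c ∈ {y | ∃ x ∈ U, R x y}, (some b' : Ev E) = some c :=
          ⟨b', ⟨x, hx, hab⟩, rfl⟩
        have ha' : ∃ x' ∈ U, (some x : Ev E) = some x' := ⟨x, hx, rfl⟩
        rw [if_pos ha', if_pos hb]
        omega
      · have : (if ∃ x ∈ U, a = some x then 1 else 0) = 0 := if_neg ha
        rw [this]
        split <;> omega

lemma exists_take_lengthU {W : Set E} :
    ∀ (t : List (Ev E)) (n : ℕ), n ≤ lengthU W t →
      ∃ i ≤ t.length, lengthU W (t.take i) = n := by
  intro t
  induction t with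
  | nil => intro n h; simp [lengthU] at h ⊢; omega
  | cons a t ih =>
      intro n h
      cases n with
      | zero => exact ⟨0, by simp, by simp [lengthU]⟩
      | succ m =>
          by_cases ha : ∃ x ∈ W, a = some x
          · have h' : m ≤ lengthU W t := by
              rw [lengthU_cons, if_pos ha] at h; omega
            obtain ⟨i, hi, hlen⟩ := ih m h'
            refine ⟨i + 1, by simpa using hi, ?_⟩
            rw [List.take_succ_cons, lengthU_cons, if_pos ha, hlen]; omega
          · have h' : m + 1 ≤ lengthU W t := by
              rw [lengthU_cons, if_neg ha] at h; omega
            obtain ⟨i, hi, hlen⟩ := ih (m + 1) h'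
            refine ⟨i + 1, by simpa using hi, ?_⟩
            rw [List.take_succ_cons, lengthU_cons, if_neg ha, hlen]; omega

lemma valid_append {s t : List (Ev E)} (hs : (none : Ev E) ∉ s) (ht : ValidTrace t) :
    ValidTrace (s ++ t) := by
  rcases validTrace_iff.1 ht with hn | ⟨t', rfl, hn⟩
  · exact validTrace_iff.2 (Or.inl (by simp [hs, hn]))
  · exact validTrace_iff.2 (Or.inr ⟨s ++ t', by simp, by simp [hs, hn]⟩)


/-! ### Main characterisation lemmas -/

variable {P : TD E} {n : ℕ}

/-- An explicit description of `restrict` applied to a renamed process, as a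
function of the restriction of the original process. -/
noncomputable def Phi (U : Set E) (R : E → E → Prop) (n : ℕ) (A : Pair E) : Pair E :=
  let W := {y | ∃ x ∈ U, R x y}
  let D' := {x | ∃ s ∈ A.2, (none : Ev E) ∉ s ∧ ∃ t r, List.Forall₂ (RE R) s t ∧
        ValidTrace r ∧ x = t ++ r}
      ∪ {x | ∃ s ∈ A.1, ∃ u r, List.Forall₂ (RE R) s u ∧ (none : Ev E) ∉ u ∧
        lengthU W u = n ∧ ValidTrace r ∧ x = u ++ r}
  (D' ∪ {u | lengthU W u ≤ n ∧ ∃ s ∈ A.1, List.Forall₂ (RE R) s u}, D')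

lemma mem_renP_snd {x : List (Ev E)} :
    x ∈ (renP R P).2 ↔ ∃ s ∈ P.D, (none : Ev E) ∉ s ∧ ∃ t r, List.Forall₂ (RE R) s t ∧
      ValidTrace r ∧ x = t ++ r := Iff.rfl

lemma mem_renP_fst {x : List (Ev E)} :
    x ∈ (renP R P).1 ↔ x ∈ (renP R P).2 ∨ ∃ s ∈ P.T, List.Forall₂ (RE R) s x := Iff.rfl

lemma mem_restrict_snd {A : Pair E} {x : List (Ev E)} :
    x ∈ (restrict U n A).2 ↔ x ∈ A.2 ∨ ∃ s t, s ∈ A.1 ∧ (none : Ev E) ∉ s ∧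
      lengthU U s = n ∧ ValidTrace t ∧ x = s ++ t := Iff.rfl

lemma mem_restrict_fst {A : Pair E} {x : List (Ev E)} :
    x ∈ (restrict U n A).1 ↔ x ∈ (restrict U n A).2 ∨ (x ∈ A.1 ∧ lengthU U x ≤ n) := Iff.rfl

/-- Lemma A': the renamed image of a divergence is a divergence of the renamed process. -/
lemma renP_snd_of_div {s u : List (Ev E)} (hs : s ∈ P.D) (h : List.Forall₂ (RE R) s u) :
    u ∈ (renP R P).2 := by
  by_cases hn : (none : Ev E) ∈ s
  · have hvalid : ValidTrace s := P.valid s (P.d_sub hs)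
    rcases validTrace_iff.1 hvalid with h1 | ⟨s', rfl, hns⟩
    · exact absurd hn h1
    · rcases forall₂_split h with ⟨u₁, u₂, rfl, h1, h2⟩
      rcases h2 with _ | ⟨hab, h2⟩
      cases h2
      have := RE_none_left hab; subst this
      exact mem_renP_snd.2 ⟨s', P.tick_div s' hs, hns, u₁, [none], h1,
        by simp [ValidTrace], rfl⟩
  · exact mem_renP_snd.2 ⟨s, hs, hn, u, [], h, by simp [ValidTrace], by simp⟩

/-- Lemma B1. -/
lemma ext_of_forall₂_append {s w u r : List (Ev E)}
    (hsT : s ∈ P.T) (hns : (none : Ev E) ∉ s) (hls : lengthU U s = n)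
    (hnw : (none : Ev E) ∉ w) (h : List.Forall₂ (RE R) (s ++ w) u) (hr : ValidTrace r) :
    ∃ a b, a ∈ (renP R P).1 ∧ (none : Ev E) ∉ a ∧
      lengthU {y | ∃ x ∈ U, R x y} a = n ∧ ValidTrace b ∧ u ++ r = a ++ b := by
  rcases forall₂_split h with ⟨u₁, w₁, rfl, h1, h2⟩
  have hnu₁ : (none : Ev E) ∉ u₁ := (forall₂_none_mem h1).not.1 hns
  have hnw₁ : (none : Ev E) ∉ w₁ := (forall₂_none_mem h2).not.1 hnw
  have hle : n ≤ lengthU {y | ∃ x ∈ U, R x y} u₁ := hls ▸ lengthU_le_of_forall₂ h1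
  obtain ⟨i, hi, hlen⟩ := exists_take_lengthU u₁ n hle
  refine ⟨u₁.take i, u₁.drop i ++ (w₁ ++ r), ?_, ?_, hlen, ?_, by
    rw [← List.append_assoc, ← List.append_assoc, List.take_append_drop, List.append_assoc]⟩
  · refine mem_renP_fst.2 (Or.inr ⟨s.take i, ?_, List.forall₂_take i h1⟩)
    exact P.prefix_closed _ (s.drop i) (by rw [List.take_append_drop]; exact hsT)
  · exact fun hm => hnu₁ (List.take_subset i u₁ hm)
  · refine valid_append (fun hm => hnu₁ (List.drop_subset i u₁ hm)) (valid_append hnw₁ hr)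

/-- Lemma B3. -/
lemma ext_of_forall₂_append' {s w u : List (Ev E)}
    (hsT : s ∈ P.T) (hns : (none : Ev E) ∉ s) (hls : lengthU U s = n)
    (hw : ValidTrace w) (h : List.Forall₂ (RE R) (s ++ w) u)
    (hu : lengthU {y | ∃ x ∈ U, R x y} u ≤ n) :
    ∃ a b, a ∈ (renP R P).1 ∧ (none : Ev E) ∉ a ∧
      lengthU {y | ∃ x ∈ U, R x y} a = n ∧ ValidTrace b ∧ u = a ++ b := by
  rcases forall₂_split h with ⟨u₁, w₁, rfl, h1, h2⟩
  have hnu₁ : (none : Ev E) ∉ u₁ := (forall₂_none_mem h1).not.1 hns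
  have hle : n ≤ lengthU {y | ∃ x ∈ U, R x y} u₁ := hls ▸ lengthU_le_of_forall₂ h1
  have heq : lengthU {y | ∃ x ∈ U, R x y} u₁ = n := by
    rw [lengthU_append] at hu; omega
  exact ⟨u₁, w₁, mem_renP_fst.2 (Or.inr ⟨s, hsT, h1⟩), hnu₁, heq, forall₂_valid h2 hw, rfl⟩

/-- Second components agree. -/
lemma restrict_renP_snd (U : Set E) (R : E → E → Prop) (n : ℕ) (P : TD E) :
    (restrict {y | ∃ x ∈ U, R x y} n (renP R P)).2 =
      (Phi U R n (restrict U n P.pair)).2 := by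
  ext x
  constructor
  · intro hx
    rcases mem_restrict_snd.1 hx with h | ⟨a, b, ha1, hna, hla, hvb, rfl⟩
    · rcases mem_renP_snd.1 h with ⟨s, hsD, hn, t, r, hF, hvr, rfl⟩
      exact Or.inl ⟨s, Or.inl hsD, hn, t, r, hF, hvr, rfl⟩
    · rcases mem_renP_fst.1 ha1 with h | ⟨s, hsT, hF⟩
      · rcases mem_renP_snd.1 h with ⟨s, hsD, hn, t, r₀, hF, hvr₀, rfl⟩
        have hnr₀ : (none : Ev E) ∉ r₀ := fun hm => hna (by simp [hm])
        exact Or.inl ⟨s, Or.inl hsD, hn, t, r₀ ++ b, hF, valid_append hnr₀ hvb,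
          by simp⟩
      · refine Or.inr ⟨s, ?_, a, b, hF, hna, hla, hvb, rfl⟩
        refine Or.inr ⟨hsT, le_trans (lengthU_le_of_forall₂ hF) (le_of_eq hla)⟩
  · rintro (⟨s, hsA, hn, t, r, hF, hvr, rfl⟩ | ⟨s, hsA, u, r, hF, hnu, hlu, hvr, rfl⟩)
    · rcases hsA with hsD | ⟨s₁, w, hs₁T, hns₁, hls₁, hvw, rfl⟩
      · exact mem_restrict_snd.2 (Or.inl (mem_renP_snd.2 ⟨s, hsD, hn, t, r, hF, hvr, rfl⟩))
      · have hnw : (none : Ev E) ∉ w := fun hm => hn (by simp [hm])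
        obtain ⟨a, b, h1, h2, h3, h4, h5⟩ :=
          ext_of_forall₂_append hs₁T hns₁ hls₁ hnw hF hvr
        exact mem_restrict_snd.2 (Or.inr ⟨a, b, h1, h2, h3, h4, h5⟩)
    · have hns : (none : Ev E) ∉ s := (forall₂_none_mem hF).not.2 hnu
      rcases hsA with (hsD | ⟨s₁, w, hs₁T, hns₁, hls₁, hvw, rfl⟩) | ⟨hsT, _⟩
      · have hnw : (none : Ev E) ∉ s := hns
        exact mem_restrict_snd.2 (Or.inl (mem_renP_snd.2 ⟨s, hsD, hns, u, r, hF, hvr, rfl⟩))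
      · have hnw : (none : Ev E) ∉ w := fun hm => hns (by simp [hm])
        obtain ⟨a, b, h1, h2, h3, h4, h5⟩ :=
          ext_of_forall₂_append hs₁T hns₁ hls₁ hnw hF hvr
        exact mem_restrict_snd.2 (Or.inr ⟨a, b, h1, h2, h3, h4, h5⟩)
      · exact mem_restrict_snd.2 (Or.inr ⟨u, r, mem_renP_fst.2 (Or.inr ⟨s, hsT, hF⟩),
          hnu, hlu, hvr, rfl⟩)

/-- The main characterisation: restriction of a renamed process is a function of the
restriction of the original process. -/
lemma restrict_renP (U : Set E) (R : E → E → Prop) (n : ℕ) (P : TD E) :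
    restrict {y | ∃ x ∈ U, R x y} n (renP R P) = Phi U R n (restrict U n P.pair) := by
  have hsnd := restrict_renP_snd U R n P
  refine Prod.ext ?_ hsnd
  ext x
  constructor
  · intro hx
    rcases mem_restrict_fst.1 hx with h | ⟨h1, h2⟩
    · exact Or.inl ((Set.ext_iff.1 hsnd x).1 h)
    · rcases mem_renP_fst.1 h1 with h | ⟨s, hsT, hF⟩
      · exact Or.inl ((Set.ext_iff.1 hsnd x).1 (mem_restrict_snd.2 (Or.inl h)))
      · exact Or.inr ⟨h2, s, Or.inr ⟨hsT, le_trans (lengthU_le_of_forall₂ hF) h2⟩, hF⟩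
  · rintro (h | ⟨hlx, s, hsA, hF⟩)
    · exact mem_restrict_fst.2 (Or.inl ((Set.ext_iff.1 hsnd x).2 h))
    · rcases hsA with (hsD | ⟨s₁, w, hs₁T, hns₁, hls₁, hvw, rfl⟩) | ⟨hsT, _⟩
      · exact mem_restrict_fst.2 (Or.inl (mem_restrict_snd.2
          (Or.inl (renP_snd_of_div hsD hF))))
      · obtain ⟨a, b, h1, h2, h3, h4, h5⟩ :=
          ext_of_forall₂_append' hs₁T hns₁ hls₁ hvw hF hlx
        exact mem_restrict_fst.2 (Or.inl (mem_restrict_snd.2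
          (Or.inr ⟨a, b, h1, h2, h3, h4, h5⟩)))
      · exact mem_restrict_fst.2 (Or.inr ⟨mem_renP_fst.2 (Or.inr ⟨s, hsT, hF⟩), hlx⟩)

/-- At level `0` every process restricts to the set of all valid traces. -/
lemma restrict_zero (U : Set E) (P : TD E) :
    restrict U 0 P.pair = ({s | ValidTrace s}, {s | ValidTrace s}) := by
  have hsnd : (restrict U 0 P.pair).2 = {s | ValidTrace s} := by
    ext x
    constructor
    · rintro (h | ⟨s, t, hsT, hns, _, hvt, rfl⟩)
      · exact P.valid x (P.d_sub h)
      · exact valid_append hns hvt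
    · intro hx
      exact Or.inr ⟨[], x, P.nonempty, by simp, by simp [lengthU], hx, by simp⟩
  refine Prod.ext ?_ hsnd
  ext x
  constructor
  · rintro (h | ⟨h1, _⟩)
    · exact (Set.ext_iff.1 hsnd x).1 h
    · exact P.valid x h1
  · intro hx
    exact Or.inl ((Set.ext_iff.1 hsnd x).2 hx)

/-- Renaming transforms the metric along the image of the index set:
`d_{R(U)}(P[R], Q[R]) ≤ d_U(P, Q)`. -/
theorem rename_nonexpansive (U : Set E) (R : E → E → Prop) (P Q : TD E) :
    dU {y | ∃ x ∈ U, R x y} (renP R P) (renP R Q) ≤ dU U P.pair Q.pair := by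
  unfold dU
  refine csInf_le_csInf ⟨0, ?_⟩ ⟨1, 0, ?_, by norm_num⟩ ?_
  · rintro x ⟨n, _, rfl⟩
    positivity
  · rw [restrict_zero U P, restrict_zero U Q]
  · rintro x ⟨n, h, rfl⟩
    exact ⟨n, by rw [restrict_renP U R n P, restrict_renP U R n Q, h], rfl⟩

end CSPLL
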